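/- The Turing-machine state function is idempotent: for every nonempty token sequence x all of whose tokens have non-blank symbol component, s_TM(s_TM(x)) = s_TM(x). -/

import Mathlib

variable {Q A : Type*}

/-- A Turing machine configuration: control state, tape contents, head position. -/
abbrev Config (Q A : Type*) := Q × (ℤ → A) × ℤ

/-- The transition function extended to configurations:
`δ(q, σ, p) := δ(q, σ p)`. -/
def extDelta (δ : Q → A → Q × A × ℤ) (c : Config Q A) : Q × A × ℤ :=
  δ c.1 (c.2.1 c.2.2)

/-- Update of a configuration by a token `(q', a, d)`:
`Update((q,σ,p), (q',a,d)) = (q', σ[p ↦ a], p + d)`. -/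
def Update (c : Config Q A) (x : Q × A × ℤ) : Config Q A :=
  (x.1, Function.update c.2.1 c.2.2 x.2.1, c.2.2 + x.2.2)

/-- Update extended to finite token sequences by left-to-right folding. -/
def UpdateSeq (c : Config Q A) (xs : List (Q × A × ℤ)) : Config Q A :=
  xs.foldl Update c

/-- One step of the Turing machine on configurations: `g_δ(c) = Update(c, δ(c))`. -/
def gStep (δ : Q → A → Q × A × ℤ) (c : Config Q A) : Config Q A :=
  Update c (extDelta δ c)

/-- Translational equivalence of Turing machine configurations. -/
def TransEquiv (c₁ c₂ : Config Q A) : Prop :=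
  c₁.1 = c₂.1 ∧
    ∃ k : ℤ, (∀ i : ℤ, c₁.2.1 i = c₂.2.1 (i - k)) ∧ c₁.2.2 = c₂.2.2 + k

/-- Position of the rightmost non-blank symbol on the tape. -/
noncomputable def maxPos (b : A) (σ : ℤ → A) : ℤ := sSup {j : ℤ | σ j ≠ b}

/-- Position of the leftmost non-blank symbol on the tape. -/
noncomputable def minPos (b : A) (σ : ℤ → A) : ℤ := sInf {j : ℤ | σ j ≠ b}

/-- A configuration is embeddable if the set of non-blank positions is finite and
nonempty and the head position satisfies `min_pos − 1 ≤ p ≤ max_pos + 1`. -/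
def Embeddable (b : A) (c : Config Q A) : Prop :=
  {j : ℤ | c.2.1 j ≠ b}.Finite ∧ {j : ℤ | c.2.1 j ≠ b}.Nonempty ∧
    minPos b c.2.1 - 1 ≤ c.2.2 ∧ c.2.2 ≤ maxPos b c.2.1 + 1

/-- The move `d_i` of the `i`-th token (1-indexed) of the embedding, given the
leftmost non-blank position `l`, rightmost non-blank position `m`, and head
position `p`:  `d_i = +1` for `1 ≤ i ≤ m − l`; at `i = m − l + 1` it is `+1` if
`p = m + 1`, `0` if `p = m`, and `−1` if `p ≤ m − 1`; and `d_i = −1` afterwards. -/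
def moveAt (l m p : ℤ) (i : ℕ) : ℤ :=
  if (i : ℤ) ≤ m - l then 1
  else if (i : ℤ) = m - l + 1 then
    (if p = m + 1 then 1 else if p = m then 0 else -1)
  else -1

/-- The tape position read by the `i`-th token (1-indexed) of the embedding:
`min_pos + ∑_{j=1}^{i−1} d_j`. -/
def posAt (l m p : ℤ) (i : ℕ) : ℤ :=
  l + ∑ j ∈ Finset.range (i - 1), moveAt l m p (j + 1)

/-- Length of the embedding:
`n = (max_pos − min_pos) + max(max_pos − p − 1, 0) + 1`. -/
noncomputable def embedLen (b : A) (c : Config Q A) : ℕ :=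
  (maxPos b c.2.1 - minPos b c.2.1).toNat + (maxPos b c.2.1 - c.2.2 - 1).toNat + 1

/-- The embedding of an (embeddable) configuration `c = (q, σ, p)` as a token
sequence `(x₁, …, x_n)` with `x_i = (q, σ(min_pos + ∑_{j<i} d_j), d_i)`. -/
noncomputable def embed (b : A) (c : Config Q A) : List (Q × A × ℤ) :=
  List.ofFn (fun i : Fin (embedLen b c) =>
    (c.1, c.2.1 (posAt (minPos b c.2.1) (maxPos b c.2.1) c.2.2 (i + 1)),
      moveAt (minPos b c.2.1) (maxPos b c.2.1) c.2.2 (i + 1)))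

/-- The Turing-machine state function: `s_TM(x) := embed(Update(c₀, x))`, where
`c₀ = (q₀, fun _ ↦ b, 0)` is the all-blank initial configuration. -/
noncomputable def sTM (b : A) (q₀ : Q) (xs : List (Q × A × ℤ)) :
    List (Q × A × ℤ) :=
  embed b (UpdateSeq (q₀, fun _ => b, (0 : ℤ)) xs)

section AuxLemmas
variable (b : A)

lemma minPos_le' {σ : ℤ → A} (hf : {j : ℤ | σ j ≠ b}.Finite) {j : ℤ} (hj : σ j ≠ b) :
    minPos b σ ≤ j := csInf_le hf.bddBelow hj

lemma le_maxPos' {σ : ℤ → A} (hf : {j : ℤ | σ j ≠ b}.Finite) {j : ℤ} (hj : σ j ≠ b) :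
    j ≤ maxPos b σ := le_csSup hf.bddAbove hj

lemma minPos_le_maxPos {σ : ℤ → A} (hf : {j : ℤ | σ j ≠ b}.Finite)
    (hne : {j : ℤ | σ j ≠ b}.Nonempty) : minPos b σ ≤ maxPos b σ := by
  obtain ⟨j, hj⟩ := hne
  exact le_trans (minPos_le' b hf hj) (le_maxPos' b hf hj)

lemma tapeSupport_translate (σ : ℤ → A) (k : ℤ) :
    {j : ℤ | σ (j + k) ≠ b} = (fun j => j - k) '' {j : ℤ | σ j ≠ b} := by
  ext j
  constructor
  · intro h; exact ⟨j + k, h, by ring⟩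
  · rintro ⟨i, hi, rfl⟩; simpa using hi

lemma minPos_translate (σ : ℤ → A) (k : ℤ) (hf : {j : ℤ | σ j ≠ b}.Finite)
    (hne : {j : ℤ | σ j ≠ b}.Nonempty) :
    minPos b (fun i => σ (i + k)) = minPos b σ - k := by
  have hf' : {j : ℤ | σ (j + k) ≠ b}.Finite := by
    rw [tapeSupport_translate]; exact hf.image _
  have hne' : {j : ℤ | σ (j + k) ≠ b}.Nonempty := by
    obtain ⟨j, hj⟩ := hne
    exact ⟨j - k, by simpa using hj⟩
  apply le_antisymm
  · apply csInf_le hf'.bddBelow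
    have : σ (minPos b σ - k + k) ≠ b := by
      have := hne.csInf_mem hf
      simpa [minPos] using this
    exact this
  · have hmem : σ (minPos b (fun i => σ (i + k)) + k) ≠ b := hne'.csInf_mem hf'
    have := minPos_le' b hf hmem
    omega

lemma maxPos_translate (σ : ℤ → A) (k : ℤ) (hf : {j : ℤ | σ j ≠ b}.Finite)
    (hne : {j : ℤ | σ j ≠ b}.Nonempty) :
    maxPos b (fun i => σ (i + k)) = maxPos b σ - k := by
  have hf' : {j : ℤ | σ (j + k) ≠ b}.Finite := by
    rw [tapeSupport_translate]; exact hf.image _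
  have hne' : {j : ℤ | σ (j + k) ≠ b}.Nonempty := by
    obtain ⟨j, hj⟩ := hne
    exact ⟨j - k, by simpa using hj⟩
  apply le_antisymm
  · have hmem : σ (maxPos b (fun i => σ (i + k)) + k) ≠ b := hne'.csSup_mem hf'
    have := le_maxPos' b hf hmem
    omega
  · apply le_csSup hf'.bddAbove
    have : σ (maxPos b σ - k + k) ≠ b := by
      have := hne.csSup_mem hf
      simpa [maxPos] using this
    exact this

lemma moveAt_translate (l m p k : ℤ) (i : ℕ) :
    moveAt (l - k) (m - k) (p - k) i = moveAt l m p i := by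
  unfold moveAt
  have h1 : m - k - (l - k) = m - l := by ring
  rw [h1]
  have h2 : (p - k = m - k + 1) = (p = m + 1) := by
    apply propext; omega
  have h3 : (p - k = m - k) = (p = m) := by
    apply propext; omega
  simp only [h2, h3]

lemma posAt_translate (l m p k : ℤ) (i : ℕ) :
    posAt (l - k) (m - k) (p - k) i = posAt l m p i - k := by
  unfold posAt
  rw [Finset.sum_congr rfl (fun j _ => moveAt_translate l m p k (j + 1))]
  ring

lemma embed_translate (q : Q) (σ : ℤ → A) (p k : ℤ) (hf : {j : ℤ | σ j ≠ b}.Finite)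
    (hne : {j : ℤ | σ j ≠ b}.Nonempty) :
    embed b (q, (fun i => σ (i + k)), p - k) = embed b (q, σ, p) := by
  have hmin := minPos_translate b σ k hf hne
  have hmax := maxPos_translate b σ k hf hne
  have hlen : embedLen b ((q, (fun i => σ (i + k)), p - k) : Config Q A)
      = embedLen b ((q, σ, p) : Config Q A) := by
    simp only [embedLen, hmin, hmax]
    omega
  apply List.ext_getElem
  · simp [embed, hlen]
  · intro i h1 h2
    simp only [embed, List.getElem_ofFn, hmin, hmax]
    rw [posAt_translate, moveAt_translate]
    simp

lemma embed_clamp (q : Q) (σ : ℤ → A) (p : ℤ) (hp : maxPos b σ + 2 ≤ p) :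
    embed b (q, σ, p) = embed b (q, σ, maxPos b σ - 1) := by
  set l := minPos b σ
  set m := maxPos b σ
  have hmv : ∀ i : ℕ, moveAt l m p i = moveAt l m (m - 1) i := by
    intro i
    unfold moveAt
    split_ifs <;> omega
  have hpos : ∀ i : ℕ, posAt l m p i = posAt l m (m - 1) i := by
    intro i
    unfold posAt
    rw [Finset.sum_congr rfl (fun j _ => hmv (j + 1))]
  have hlen : embedLen b ((q, σ, p) : Config Q A)
      = embedLen b ((q, σ, m - 1) : Config Q A) := by
    simp only [embedLen]
    omega
  apply List.ext_getElem
  · simp [embed, hlen]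
  · intro i h1 h2
    simp only [embed, List.getElem_ofFn]
    rw [hpos, hmv]

lemma updateSeq_walk (q₀ q : Q) (σ : ℤ → A) (g : ℕ → ℤ) (n : ℕ) (hn : 0 < n) :
    UpdateSeq ((q₀, fun _ => b, 0) : Config Q A)
        (List.ofFn (fun i : Fin n => (q, σ (g i), g (i + 1) - g i)))
      = (q, (fun j => if ∃ i < n, g i = j + g 0 then σ (j + g 0) else b), g n - g 0) := by
  induction n with
  | zero => omega
  | succ n ih =>
    rw [List.ofFn_succ']
    rcases Nat.eq_zero_or_pos n with h0 | hpos
    · subst h0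
      simp only [List.ofFn_zero, List.concat_eq_append, List.nil_append]
      show Update (q₀, fun _ => b, 0) _ = _
      unfold Update
      refine Prod.ext rfl (Prod.ext ?_ ?_)
      · funext j
        dsimp only
        by_cases hj : j = 0
        · subst hj
          rw [Function.update_self, if_pos ⟨0, Nat.zero_lt_one, by ring⟩]
          simp
        · rw [Function.update_of_ne hj]
          rw [if_neg]
          rintro ⟨i, hi, hgi⟩
          interval_cases i
          omega
      · show (0 : ℤ) + (g 1 - g 0) = g 1 - g 0
        ring
    · have hcast : (fun i : Fin n =>
          ((fun i : Fin (n+1) => ((q, σ (g i), g (i + 1) - g i) : Q × A × ℤ)) i.castSucc))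
          = fun i : Fin n => ((q, σ (g i), g (i + 1) - g i) : Q × A × ℤ) := by
        funext i
        simp [Fin.coe_castSucc]
      rw [List.concat_eq_append]
      show UpdateSeq _ (_ ++ [_]) = _
      unfold UpdateSeq
      rw [List.foldl_append]
      show Update (UpdateSeq _ _) _ = _
      rw [hcast, ih hpos]
      unfold Update
      simp only [Fin.val_last]
      refine Prod.ext rfl (Prod.ext ?_ ?_)
      · funext j
        dsimp only
        by_cases hj : j = g n - g 0
        · subst hj
          rw [Function.update_self]
          have hex : ∃ i < n + 1, g i = (g n - g 0) + g 0 := ⟨n, by omega, by ring⟩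
          simp only [hex, if_true]
          congr 1
          ring
        · rw [Function.update_of_ne hj]
          have : (∃ i < n, g i = j + g 0) ↔ (∃ i < n + 1, g i = j + g 0) := by
            constructor
            · rintro ⟨i, hi, h⟩; exact ⟨i, by omega, h⟩
            · rintro ⟨i, hi, h⟩
              refine ⟨i, ?_, h⟩
              rcases Nat.lt_succ_iff_lt_or_eq.mp hi with h' | h'
              · exact h'
              · exfalso; subst h'; omega
          simp only [this]
      · show (g n - g 0) + (g (n + 1) - g n) = g (n + 1) - g 0
        ring

lemma update_embed (q₀ q : Q) (σ : ℤ → A) (p : ℤ)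
    (hf : {j : ℤ | σ j ≠ b}.Finite) (hne : {j : ℤ | σ j ≠ b}.Nonempty) :
    UpdateSeq ((q₀, fun _ => b, 0) : Config Q A) (embed b (q, σ, p))
      = (q, (fun i => σ (i + minPos b σ)),
          (if p ≤ maxPos b σ + 1 then p else maxPos b σ - 1) - minPos b σ) := by
  set l := minPos b σ with hl
  set m := maxPos b σ with hm
  have hlm : l ≤ m := minPos_le_maxPos b hf hne
  set L : ℕ := (m - l).toNat with hL
  set K : ℕ := (m - p - 1).toNat with hK
  set g : ℕ → ℤ := fun i => l + ∑ j ∈ Finset.range i, moveAt l m p (j + 1) with hg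
  have hg0 : g 0 = l := by simp [hg]
  have hgsucc : ∀ i : ℕ, g (i + 1) = g i + moveAt l m p (i + 1) := by
    intro i
    simp [hg, Finset.sum_range_succ]
    ring
  set n : ℕ := embedLen b ((q, σ, p) : Config Q A) with hn
  have hnn : n = L + 1 + K := by
    simp only [hn, embedLen, hL, hK]
    omega
  -- the embedding is a walk
  have hemb : embed b ((q, σ, p) : Config Q A)
      = List.ofFn (fun i : Fin n => (q, σ (g i), g (i + 1) - g i)) := by
    unfold embed
    congr 1
    funext i
    have h1 : posAt l m p (i + 1) = g i := by
      simp only [posAt, hg, Nat.add_sub_cancel]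
    have h2 : moveAt l m p (i + 1) = g (i + 1) - g i := by
      rw [hgsucc]; ring
    rw [← hl, ← hm, h1, h2]
  -- values of the walk
  have hg_up : ∀ i : ℕ, i ≤ L → g i = l + i := by
    intro i
    induction i with
    | zero => intro _; simpa using hg0
    | succ i ih =>
      intro hiL
      rw [hgsucc, ih (by omega)]
      have hmv : moveAt l m p (i + 1) = 1 := by
        unfold moveAt
        rw [if_pos]
        have : (L : ℤ) = m - l := by omega
        push_cast
        omega
      rw [hmv]
      push_cast
      ring
  have hgL1 : g (L + 1) = m + (if p = m + 1 then 1 else if p = m then 0 else -1) := by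
    rw [hgsucc, hg_up L le_rfl]
    have hLz : (L : ℤ) = m - l := by omega
    have hmv : moveAt l m p (L + 1)
        = (if p = m + 1 then 1 else if p = m then 0 else -1) := by
      unfold moveAt
      rw [if_neg (by push_cast; omega), if_pos (by push_cast; omega)]
    rw [hmv]
    omega
  have hg_down : ∀ k : ℕ, g (L + 1 + k) = g (L + 1) - k := by
    intro k
    induction k with
    | zero => simp
    | succ k ih =>
      have : L + 1 + (k + 1) = (L + 1 + k) + 1 := by omega
      rw [this, hgsucc, ih]
      have hmv : moveAt l m p ((L + 1 + k) + 1) = -1 := by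
        unfold moveAt
        have hLz : (L : ℤ) = m - l := by omega
        rw [if_neg (by push_cast; omega), if_neg (by push_cast; omega)]
      rw [hmv]
      push_cast
      ring
  have hgn : g n = if p ≤ m + 1 then p else m - 1 := by
    rw [hnn, hg_down K, hgL1]
    have hKz : (K : ℤ) = max (m - p - 1) 0 := by omega
    split_ifs <;> omega
  rw [hemb, updateSeq_walk b q₀ q σ g n (by omega), hg0, hgn]
  refine Prod.ext rfl (Prod.ext ?_ rfl)
  funext j
  dsimp only
  by_cases hex : ∃ i < n, g i = j + l
  · rw [if_pos hex]
  · rw [if_neg hex]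
    by_contra hb
    have hb' : σ (j + l) ≠ b := fun h => hb h.symm
    have h1 : l ≤ j + l := minPos_le' b hf hb'
    have h2 : j + l ≤ m := le_maxPos' b hf hb'
    apply hex
    refine ⟨j.toNat, by omega, ?_⟩
    rw [hg_up j.toNat (by omega)]
    omega

lemma updateSeq_cons (c : Config Q A) (t : Q × A × ℤ) (ts : List (Q × A × ℤ)) :
    UpdateSeq c (t :: ts) = UpdateSeq (Update c t) ts := rfl

lemma updateSeq_support_finite (c : Config Q A) (xs : List (Q × A × ℤ))
    (h : {j : ℤ | c.2.1 j ≠ b}.Finite) :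
    {j : ℤ | (UpdateSeq c xs).2.1 j ≠ b}.Finite := by
  induction xs generalizing c with
  | nil => exact h
  | cons t ts ih =>
    rw [updateSeq_cons]
    apply ih
    apply Set.Finite.subset (h.union (Set.finite_singleton c.2.2))
    intro j hj
    by_cases hjp : j = c.2.2
    · exact Or.inr hjp
    · left
      simp only [Update, Set.mem_setOf_eq] at hj
      rw [Function.update_of_ne hjp] at hj
      exact hj

lemma updateSeq_apply_mem (xs : List (Q × A × ℤ)) (c : Config Q A) (j : ℤ) :
    (UpdateSeq c xs).2.1 j = c.2.1 j ∨ ∃ t ∈ xs, (UpdateSeq c xs).2.1 j = t.2.1 := by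
  induction xs generalizing c with
  | nil => exact Or.inl rfl
  | cons t ts ih =>
    rw [updateSeq_cons]
    rcases ih (Update c t) with h | ⟨u, hu, he⟩
    · by_cases hjp : j = c.2.2
      · right
        refine ⟨t, List.mem_cons_self, ?_⟩
        rw [h]
        simp only [Update]
        rw [hjp, Function.update_self]
      · left
        rw [h]
        simp only [Update]
        rw [Function.update_of_ne hjp]
    · exact Or.inr ⟨u, List.mem_cons_of_mem t hu, he⟩


theorem sTM_idempotent' (b : A) (q₀ : Q)
    (x : List (Q × A × ℤ)) (hx : x ≠ [])
    (hxb : ∀ tok ∈ x, tok.2.1 ≠ b) :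
    sTM b q₀ (sTM b q₀ x) = sTM b q₀ x := by
  classical
  set c₁ : Config Q A := UpdateSeq (q₀, fun _ => b, (0 : ℤ)) x with hc₁
  have hfin : {j : ℤ | c₁.2.1 j ≠ b}.Finite := by
    apply updateSeq_support_finite
    simp
  have hne : {j : ℤ | c₁.2.1 j ≠ b}.Nonempty := by
    obtain ⟨t, ts, rfl⟩ := List.exists_cons_of_ne_nil hx
    refine ⟨0, ?_⟩
    have h0 : (Update ((q₀, fun _ => b, (0 : ℤ)) : Config Q A) t).2.1 0 = t.2.1 := by
      simp [Update]
    rw [hc₁, updateSeq_cons]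
    rcases updateSeq_apply_mem ts (Update (q₀, fun _ => b, (0 : ℤ)) t) 0 with h | ⟨u, hu, he⟩
    · rw [Set.mem_setOf_eq, h, h0]
      exact hxb t (List.mem_cons_self)
    · rw [Set.mem_setOf_eq, he]
      exact hxb u (List.mem_cons_of_mem t hu)
  have hc₁eta : c₁ = (c₁.1, c₁.2.1, c₁.2.2) := rfl
  show embed b (UpdateSeq (q₀, fun _ => b, (0 : ℤ)) (embed b c₁)) = embed b c₁
  rw [hc₁eta, update_embed b q₀ c₁.1 c₁.2.1 c₁.2.2 hfin hne,
    embed_translate b c₁.1 c₁.2.1 _ (minPos b c₁.2.1) hfin hne]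
  by_cases hp : c₁.2.2 ≤ maxPos b c₁.2.1 + 1
  · rw [if_pos hp]
  · rw [if_neg hp, ← embed_clamp b c₁.1 c₁.2.1 c₁.2.2 (by omega)]


end AuxLemmas

/-- The Turing-machine state function is idempotent: for every
nonempty token sequence `x` all of whose tokens have non-blank symbol component,
`s_TM(s_TM(x)) = s_TM(x)`. -/
theorem sTM_idempotent [Fintype Q] [Fintype A] (b : A) (q₀ : Q)
    (δ : Q → A → Q × A × ℤ)
    (hδ₁ : ∀ q a, (δ q a).2.1 ≠ b)
    (hδ₂ : ∀ q a, (δ q a).2.2 = -1 ∨ (δ q a).2.2 = 0 ∨ (δ q a).2.2 = 1)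
    (x : List (Q × A × ℤ)) (hx : x ≠ [])
    (hxb : ∀ tok ∈ x, tok.2.1 ≠ b) :
    sTM b q₀ (sTM b q₀ x) = sTM b q₀ x :=
  sTM_idempotent' b q₀ x hx hxb
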